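/- As d → ∞, σ_d² := (α_d + α_d² - β_d - μ_d α_d)/γ_d tends to 0, where α_d = Σ_p (p-1)²/p^{d+2}, β_d = Σ_p ((p-1)²/p^{d+2})², γ_d = 1 - Π_p (1 - (p-1)²/p^{d+2}), and μ_d = α_d/γ_d. -/
import Mathlib

open Filter Real

private lemma aux_prod_one_sub_lb (s : Finset Nat.Primes) (f : Nat.Primes → ℝ)
    (h0 : ∀ i, 0 ≤ f i) (h1 : ∀ i, f i ≤ 1) :
    1 - ∑ i ∈ s, f i ≤ ∏ i ∈ s, (1 - f i) := by
  induction s using Finset.cons_induction with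
  | empty => simp
  | cons a s ha ih =>
    rw [Finset.sum_cons, Finset.prod_cons]
    have hs : 0 ≤ ∑ i ∈ s, f i := Finset.sum_nonneg fun i _ => h0 i
    have h2 := mul_le_mul_of_nonneg_left ih (sub_nonneg.2 (h1 a))
    nlinarith [mul_nonneg (h0 a) hs]

theorem sigma_sq_tendsto_zero :
    Filter.Tendsto
      (fun d : ℕ =>
        let α : ℝ := ∑' p : Nat.Primes, ((p : ℕ) - 1 : ℝ)^2 / ((p : ℕ) : ℝ)^(d + 2)
        let β : ℝ := ∑' p : Nat.Primes, (((p : ℕ) - 1 : ℝ)^2 / ((p : ℕ) : ℝ)^(d + 2))^2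
        let γ : ℝ := 1 - ∏' p : Nat.Primes, (1 - ((p : ℕ) - 1 : ℝ)^2 / ((p : ℕ) : ℝ)^(d + 2))
        let μ : ℝ := α / γ
        (α + α^2 - β - μ * α) / γ)
      Filter.atTop (nhds 0) := by
  -- the summands
  set x : ℕ → Nat.Primes → ℝ :=
    fun d p => ((p : ℕ) - 1 : ℝ)^2 / ((p : ℕ) : ℝ)^(d + 2) with hxdef
  set A : ℕ → ℝ := fun d => ∑' p : Nat.Primes, x d p with hAdef
  set B : ℕ → ℝ := fun d => ∑' p : Nat.Primes, (x d p)^2 with hBdef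
  set G : ℕ → ℝ := fun d => 1 - ∏' p : Nat.Primes, (1 - x d p) with hGdef
  show Tendsto (fun d : ℕ => (A d + (A d)^2 - B d - (A d / G d) * A d) / G d) atTop (nhds 0)
  have hp2 : ∀ p : Nat.Primes, (2 : ℝ) ≤ ((p : ℕ) : ℝ) := fun p => by
    exact_mod_cast p.2.two_le
  have hppos : ∀ p : Nat.Primes, (0 : ℝ) < ((p : ℕ) : ℝ) := fun p => by linarith [hp2 p]
  have hx0 : ∀ d p, 0 ≤ x d p := fun d p =>
    div_nonneg (sq_nonneg _) (pow_nonneg (hppos p).le _)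
  -- upper bound x d p ≤ (p^d)⁻¹
  have hxle : ∀ d p, x d p ≤ (((p : ℕ) : ℝ)^d)⁻¹ := by
    intro d p
    have hp := hp2 p
    have hpd : (0 : ℝ) < ((p : ℕ) : ℝ)^d := pow_pos (hppos p) d
    rw [hxdef]
    simp only
    rw [div_le_iff₀ (pow_pos (hppos p) _)]
    have hsplit : ((p : ℕ) : ℝ)^(d + 2) = ((p : ℕ) : ℝ)^d * ((p : ℕ) : ℝ)^2 := by
      rw [pow_add]
    rw [hsplit, ← mul_assoc, inv_mul_cancel₀ hpd.ne', one_mul]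
    nlinarith
  have hx1 : ∀ d p, x d p ≤ 1 := by
    intro d p
    refine (hxle d p).trans ?_
    rw [inv_le_one_iff₀]
    right
    exact one_le_pow₀ (by linarith [hp2 p])
  -- summability of p ↦ p⁻²
  have hCsum : Summable (fun p : Nat.Primes => (((p : ℕ) : ℝ)^2)⁻¹) := by
    have h := Nat.Primes.summable_rpow.mpr (show (-2 : ℝ) < -1 by norm_num)
    refine h.congr fun p => ?_
    rw [Real.rpow_neg (hppos p).le, Real.rpow_two]
  set C : ℝ := ∑' p : Nat.Primes, (((p : ℕ) : ℝ)^2)⁻¹ with hCdef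
  -- refined bound for d ≥ 2
  have hxle2 : ∀ d, 2 ≤ d → ∀ p, x d p ≤ (2 : ℝ)⁻¹^(d - 2) * (((p : ℕ) : ℝ)^2)⁻¹ := by
    intro d hd p
    refine (hxle d p).trans ?_
    have hp := hp2 p
    obtain ⟨e, rfl⟩ : ∃ e, d = e + 2 := ⟨d - 2, by omega⟩
    have he : e + 2 - 2 = e := by omega
    rw [he, pow_add, mul_inv]
    gcongr
    rw [inv_pow, inv_le_inv₀ (pow_pos (hppos p) e) (by positivity)]
    exact pow_le_pow_left₀ (by norm_num) hp e
  -- summability of x d for d ≥ 2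
  have hsum : ∀ d, 2 ≤ d → Summable (x d) := by
    intro d hd
    exact (hCsum.mul_left _).of_nonneg_of_le (fun p => hx0 d p) (hxle2 d hd)
  -- A tends to zero
  have hAle : ∀ d, 2 ≤ d → A d ≤ (2 : ℝ)⁻¹^(d - 2) * C := by
    intro d hd
    rw [hAdef]
    simp only
    calc ∑' p : Nat.Primes, x d p
        ≤ ∑' p : Nat.Primes, (2 : ℝ)⁻¹^(d - 2) * (((p : ℕ) : ℝ)^2)⁻¹ :=
          Summable.tsum_le_tsum (hxle2 d hd) (hsum d hd) (hCsum.mul_left _)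
      _ = (2 : ℝ)⁻¹^(d - 2) * C := tsum_mul_left
  have hA0 : ∀ d, 0 ≤ A d := fun d => tsum_nonneg (fun p => hx0 d p)
  have hAtendsto : Tendsto A atTop (nhds 0) := by
    have hg : Tendsto (fun d : ℕ => (2 : ℝ)⁻¹^(d - 2) * C) atTop (nhds 0) := by
      have h1 : Tendsto (fun n : ℕ => (2 : ℝ)⁻¹^n) atTop (nhds 0) :=
        tendsto_pow_atTop_nhds_zero_of_lt_one (by norm_num) (by norm_num)
      have h2 := (h1.comp (tendsto_sub_atTop_nat 2)).mul_const C
      simpa using h2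
    refine squeeze_zero' (Eventually.of_forall hA0) ?_ hg
    filter_upwards [eventually_ge_atTop 2] with d hd
    exact hAle d hd
  -- key pointwise bound
  have key : ∀ d, 2 ≤ d → A d ≤ 1/2 →
      |(A d + (A d)^2 - B d - (A d / G d) * A d) / G d| ≤ 4 * A d := by
    intro d hd hAhalf
    have hs := hsum d hd
    -- A d > 0
    have hApos : 0 < A d := by
      have h2 : (0 : ℝ) < x d ⟨2, Nat.prime_two⟩ := by
        rw [hxdef]
        simp only
        have : (((⟨2, Nat.prime_two⟩ : Nat.Primes) : ℕ) : ℝ) = 2 := by norm_num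
        rw [this]
        norm_num
      exact h2.trans_le (Summable.le_tsum hs _ fun p _ => hx0 d p)
    -- B bounds
    have hsB : Summable (fun p => (x d p)^2) := by
      refine hs.of_nonneg_of_le (fun p => sq_nonneg _) (fun p => ?_)
      nlinarith [hx0 d p, hx1 d p]
    have hB0 : 0 ≤ B d := tsum_nonneg fun p => sq_nonneg _
    have hBle : B d ≤ A d * A d := by
      rw [hBdef]
      simp only
      calc ∑' p : Nat.Primes, (x d p)^2
          ≤ ∑' p : Nat.Primes, x d p * A d := by
            refine Summable.tsum_le_tsum (fun p => ?_) hsB (hs.mul_right _)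
            have hle : x d p ≤ A d := Summable.le_tsum hs p fun q _ => hx0 d q
            nlinarith [hx0 d p]
        _ = A d * A d := by rw [tsum_mul_right]
    -- the product
    have hanti : Antitone (fun s : Finset Nat.Primes => ∏ p ∈ s, (1 - x d p)) := by
      intro s t hst
      simp only
      rw [← Finset.prod_sdiff hst]
      have h1 : ∏ p ∈ t \ s, (1 - x d p) ≤ 1 :=
        Finset.prod_le_one (fun i _ => by linarith [hx1 d i]) (fun i _ => by linarith [hx0 d i])
      have h2 : (0 : ℝ) ≤ ∏ p ∈ s, (1 - x d p) :=
        Finset.prod_nonneg fun i _ => by linarith [hx1 d i]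
      exact mul_le_of_le_one_left h2 h1
    have hbdd : BddBelow (Set.range (fun s : Finset Nat.Primes => ∏ p ∈ s, (1 - x d p))) := by
      refine ⟨0, ?_⟩
      rintro y ⟨s, rfl⟩
      exact Finset.prod_nonneg fun i _ => by linarith [hx0 d i, hx1 d i]
    have hmult : Multipliable (fun p => 1 - x d p) :=
      ⟨_, tendsto_atTop_ciInf hanti hbdd⟩
    have hP := hmult.hasProd
    set P : ℝ := ∏' p : Nat.Primes, (1 - x d p) with hPdef
    -- lower bound on P
    have hPlb : 1 - A d ≤ P := by
      refine ge_of_tendsto hP (Eventually.of_forall fun s => ?_)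
      have h1 : 1 - ∑ p ∈ s, x d p ≤ ∏ p ∈ s, (1 - x d p) :=
        aux_prod_one_sub_lb s (x d) (hx0 d) (hx1 d)
      have h2 : ∑ p ∈ s, x d p ≤ A d := Summable.sum_le_tsum s (fun p _ => hx0 d p) hs
      linarith
    -- upper bound on P
    have hPub : P ≤ Real.exp (-(A d)) := by
      have hneg : HasSum (fun p => -(x d p)) (-(A d)) := hs.hasSum.neg
      have htend : Tendsto (fun s : Finset Nat.Primes => Real.exp (∑ p ∈ s, -(x d p)))
          atTop (nhds (Real.exp (-(A d)))) :=
        (Real.continuous_exp.tendsto _).comp hneg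
      refine le_of_tendsto_of_tendsto' hP htend fun s => ?_
      calc ∏ p ∈ s, (1 - x d p)
          ≤ ∏ p ∈ s, Real.exp (-(x d p)) := by
            refine Finset.prod_le_prod (fun p _ => by linarith [hx0 d p, hx1 d p]) fun p _ => ?_
            linarith [Real.add_one_le_exp (-(x d p))]
        _ = Real.exp (∑ p ∈ s, -(x d p)) := (Real.exp_sum s _).symm
    -- quadratic bound for exp
    have hexp : Real.exp (-(A d)) ≤ 1 - A d + (A d)^2 := by
      set a := A d
      have e0 : (0 : ℝ) < a := hApos
      have e1 : (1 + a/2)^2 ≤ Real.exp a := by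
        have h1 := Real.add_one_le_exp (a/2)
        have h2 : Real.exp a = Real.exp (a/2) * Real.exp (a/2) := by
          rw [← Real.exp_add]; ring_nf
        nlinarith [Real.exp_pos (a/2)]
      have e2 : Real.exp (-a) * Real.exp a = 1 := by
        rw [← Real.exp_add]; simp
      have e3 : (0 : ℝ) < Real.exp (-a) := Real.exp_pos _
      nlinarith [mul_le_mul_of_nonneg_left e1 e3.le]
    -- bounds on G
    have hGub : G d ≤ A d := by
      rw [hGdef]; simp only; linarith [hPlb]
    have hGlb : A d - (A d)^2 ≤ G d := by
      rw [hGdef]; simp only; linarith [hPub.trans hexp]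
    have hGhalf : A d / 2 ≤ G d := by nlinarith
    have hGpos : 0 < G d := by nlinarith
    -- bounds on μ = A/G
    have hm1 : 1 ≤ A d / G d := (one_le_div hGpos).2 hGub
    have hm2 : A d / G d ≤ 1 + 2 * A d := by
      rw [div_le_iff₀ hGpos]
      nlinarith [mul_le_mul_of_nonneg_left hGlb (show (0:ℝ) ≤ 1 + 2 * A d by linarith),
        sq_nonneg (A d), mul_nonneg (mul_nonneg hApos.le hApos.le) hApos.le]
    -- numerator bounds
    have hmuA1 : 1 * A d ≤ (A d / G d) * A d := mul_le_mul_of_nonneg_right hm1 hApos.le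
    have hmuA2 : (A d / G d) * A d ≤ (1 + 2 * A d) * A d :=
      mul_le_mul_of_nonneg_right hm2 hApos.le
    have hG4 : 4 * A d * (A d / 2) ≤ 4 * A d * G d :=
      mul_le_mul_of_nonneg_left hGhalf (by positivity)
    rw [abs_div, abs_of_pos hGpos, div_le_iff₀ hGpos]
    refine abs_le.2 ⟨?_, ?_⟩
    · linarith [hmuA2, hBle, hG4]
    · linarith [hmuA1, hB0, hG4, sq_nonneg (A d)]
  -- conclude by squeezing
  have h4A : Tendsto (fun d => 4 * A d) atTop (nhds 0) := by
    have := hAtendsto.const_mul (4 : ℝ)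
    simpa using this
  refine squeeze_zero_norm' ?_ h4A
  filter_upwards [eventually_ge_atTop 2, hAtendsto.eventually_le_const (by norm_num : (0:ℝ) < 1/2)]
    with d hd hhalf
  simpa [Real.norm_eq_abs, abs_div] using key d hd hhalf
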